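/- Fix an integer m ≥ 1 and let d_j = (−1)^j C(m,j) / √C(2m,m) for j = 0, …, m, where C(a,b) denotes the binomial coefficient. Then d_0, …, d_m is a normalized m-th order difference sequence (Σ_{j=0}^m d_j = 0 and Σ_{j=0}^m d_j² = 1), and for every integer k with 0 ≤ k ≤ m, δ_k = (−1)^k (m!)² / ((m+k)! (m−k)!). -/
import Mathlib

/-- `δ_s = ∑_{j=|s|}^m d_j d_{j-|s|}` for `|s| ≤ m`, and `δ_s = 0` for `|s| > m`. -/
noncomputable def delta (d : ℕ → ℝ) (m : ℕ) (s : ℤ) : ℝ :=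
  if s.natAbs ≤ m then ∑ j ∈ Finset.Icc s.natAbs m, d j * d (j - s.natAbs) else 0

lemma sum_choose_mul (m k : ℕ) (hk : k ≤ m) :
    ∑ i ∈ Finset.range (m - k + 1), m.choose i * m.choose (k + i)
      = (2 * m).choose (m + k) := by
  have h1 : (2 * m).choose (m + k) = (2 * m).choose (m - k) := by
    rw [← Nat.choose_symm (by omega : m + k ≤ 2 * m)]
    congr 1; omega
  rw [h1, two_mul, Nat.add_choose_eq,
    Finset.Nat.sum_antidiagonal_eq_sum_range_succ (fun a b => m.choose a * m.choose b)]
  refine Finset.sum_congr rfl fun i hi => ?_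
  simp only [Finset.mem_range] at hi
  congr 1
  rw [← Nat.choose_symm (by omega : k + i ≤ m)]
  congr 1; omega

/-- the binomial differencing sequence
`d_j = (-1)^j C(m,j) / √C(2m,m)`, `j = 0, …, m`, is a normalized `m`-th order
difference sequence, and `δ_k = (-1)^k (m!)² / ((m+k)! (m-k)!)` for `0 ≤ k ≤ m`. -/
theorem stmt7 (m : ℕ) (hm : 1 ≤ m) (d : ℕ → ℝ)
    (hd : ∀ j : ℕ, j ≤ m →
      d j = (-1 : ℝ) ^ j * (m.choose j : ℝ) / Real.sqrt (((2 * m).choose m : ℝ))) :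
    (∑ j ∈ Finset.range (m + 1), d j = 0) ∧
    (∑ j ∈ Finset.range (m + 1), (d j) ^ 2 = 1) ∧
    (∀ k : ℕ, k ≤ m → delta d m (k : ℤ)
        = (-1 : ℝ) ^ k * (m.factorial : ℝ) ^ 2
            / (((m + k).factorial : ℝ) * ((m - k).factorial : ℝ))) := by
  have hCpos : (0 : ℝ) < ((2 * m).choose m : ℝ) := by
    exact_mod_cast Nat.choose_pos (by omega)
  set N : ℝ := Real.sqrt (((2 * m).choose m : ℝ)) with hNdef
  have hN2 : N ^ 2 = ((2 * m).choose m : ℝ) := Real.sq_sqrt hCpos.le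
  have hNpos : 0 < N := Real.sqrt_pos.mpr hCpos
  -- key delta computation, valid for all k ≤ m (k = 0 gives part 2)
  have key : ∀ k : ℕ, k ≤ m →
      ∑ j ∈ Finset.Icc k m, d j * d (j - k)
        = (-1 : ℝ) ^ k * ((2 * m).choose (m + k) : ℝ) / ((2 * m).choose m : ℝ) := by
    intro k hk
    have hre : ∑ j ∈ Finset.Icc k m, d j * d (j - k)
        = ∑ i ∈ Finset.range (m - k + 1), d (k + i) * d i := by
      rw [show Finset.Icc k m = Finset.Ico k (m + 1) from (Finset.Ico_add_one_right_eq_Icc k m).symm,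
        Finset.sum_Ico_eq_sum_range, show m + 1 - k = m - k + 1 by omega]
      refine Finset.sum_congr rfl fun i _ => ?_
      congr 1
      congr 1
      omega
    rw [hre]
    have : ∀ i ∈ Finset.range (m - k + 1), d (k + i) * d i
        = (-1 : ℝ) ^ k * ((m.choose i * m.choose (k + i) : ℕ) : ℝ)
            / ((2 * m).choose m : ℝ) := by
      intro i hi
      simp only [Finset.mem_range] at hi
      rw [hd (k + i) (by omega), hd i (by omega)]
      rw [div_mul_div_comm, show N * N = (((2 * m).choose m : ℕ) : ℝ) by
        rw [← hN2]; ring]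
      have hsign : (-1 : ℝ) ^ (k + i) * (m.choose (k + i) : ℝ) * ((-1 : ℝ) ^ i * (m.choose i : ℝ))
          = (-1 : ℝ) ^ k * ((m.choose i * m.choose (k + i) : ℕ) : ℝ) := by
        push_cast
        rw [show (-1 : ℝ) ^ (k + i) = (-1) ^ k * (-1) ^ i from pow_add _ _ _]
        have h1 : (-1 : ℝ) ^ i * (-1) ^ i = 1 := by
          rw [← pow_add, ← two_mul, pow_mul]; norm_num
        linear_combination ((-1 : ℝ) ^ k * (m.choose (k + i) : ℝ) * (m.choose i : ℝ)) * h1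
      rw [hsign]
    rw [Finset.sum_congr rfl this, ← Finset.sum_div, ← Finset.mul_sum, ← Nat.cast_sum,
      sum_choose_mul m k hk]
  refine ⟨?_, ?_, ?_⟩
  · -- sum zero
    have : ∑ j ∈ Finset.range (m + 1), d j
        = (∑ j ∈ Finset.range (m + 1), (-1 : ℝ) ^ j * (m.choose j : ℝ)) / N := by
      rw [Finset.sum_div]
      exact Finset.sum_congr rfl fun j hj => hd j (by simpa [Nat.lt_succ_iff] using hj)
    rw [this]
    have hz : (∑ j ∈ Finset.range (m + 1), (-1 : ℝ) ^ j * (m.choose j : ℝ)) = 0 := by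
      have := Int.alternating_sum_range_choose (n := m)
      rw [if_neg (by omega : m ≠ 0)] at this
      exact_mod_cast congrArg (fun z : ℤ => (z : ℝ)) this
    rw [hz, zero_div]
  · -- sum of squares = 1
    have h0 := key 0 (Nat.zero_le m)
    have heq : ∑ j ∈ Finset.range (m + 1), (d j) ^ 2
        = ∑ j ∈ Finset.Icc 0 m, d j * d (j - 0) := by
      rw [show Finset.Icc 0 m = Finset.range (m + 1) by
        ext x; simp [Nat.lt_succ_iff]]
      exact Finset.sum_congr rfl fun j _ => by rw [Nat.sub_zero]; ring
    rw [heq, h0]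
    simp [div_self hCpos.ne']
  · intro k hk
    have habs : (k : ℤ).natAbs = k := Int.natAbs_natCast k
    rw [delta, habs, if_pos hk, key k hk]
    -- now convert choose ratio to factorials
    have hc1 : ((2 * m).choose (m + k) : ℝ) * ((m + k).factorial : ℝ) * ((m - k).factorial : ℝ)
        = ((2 * m).factorial : ℝ) := by
      have := Nat.choose_mul_factorial_mul_factorial (by omega : m + k ≤ 2 * m)
      rw [show 2 * m - (m + k) = m - k by omega] at this
      exact_mod_cast this
    have hc2 : ((2 * m).choose m : ℝ) * (m.factorial : ℝ) * (m.factorial : ℝ)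
        = ((2 * m).factorial : ℝ) := by
      have := Nat.choose_mul_factorial_mul_factorial (by omega : m ≤ 2 * m)
      rw [show 2 * m - m = m by omega] at this
      exact_mod_cast this
    have hratio : (((2 * m).choose (m + k) : ℕ) : ℝ) / ((2 * m).choose m : ℝ)
        = (m.factorial : ℝ) ^ 2 / (((m + k).factorial : ℝ) * ((m - k).factorial : ℝ)) := by
      rw [div_eq_div_iff hCpos.ne' (by positivity)]
      linear_combination hc1 - hc2
    rw [mul_div_assoc, hratio, mul_div_assoc]
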